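/- Let K ∈ B(H) have closed range, and let {Λ_ω}, {Γ_ω} be c-g-Bessel families satisfying ⟨Kf, h⟩ = ∫_Ω ⟨Λ_ω* Γ_ω f, h⟩ dμ(ω) for all f, h ∈ H. Define Θ_ω = Γ_ω (K†|_{R(K)}), where K† is the pseudo-inverse of K. Then {Θ_ω} is a c-g-Bessel family for R(K) with bound B‖K†‖², and ⟨f, h⟩ = ∫_Ω ⟨Λ_ω* Θ_ω f, h⟩ dμ(ω) for all f ∈ R(K), h ∈ H. -/

import Mathlib

open MeasureTheory ContinuousLinearMap

local notation "⟪" x ", " y "⟫" => @inner ℂ _ _ x y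

/-- With `Θ_ω = Γ_ω ∘ K†` on `R(K)`: `{Θ_ω}` is c-g-Bessel for `R(K)` with bound
`B‖K†‖²` and `⟨f, h⟩ = ∫ ⟨Λ_ω* Θ_ω f, h⟩ dμ` for `f ∈ R(K)`, `h ∈ H`. -/
theorem dual_on_range_of_K
    {H E Ω : Type*} [NormedAddCommGroup H] [InnerProductSpace ℂ H] [CompleteSpace H]
    [NormedAddCommGroup E] [InnerProductSpace ℂ E] [CompleteSpace E]
    [MeasurableSpace Ω] (μ : Measure Ω)
    (K : H →L[ℂ] H) (hK : IsClosed (LinearMap.range (K : H →ₗ[ℂ] H) : Set H))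
    (Kdag : H →L[ℂ] H) (hKdag : ∀ f ∈ LinearMap.range (K : H →ₗ[ℂ] H), K (Kdag f) = f)
    (Λ Γ : Ω → (H →L[ℂ] E))
    (hmeasΛ : ∀ f : H, StronglyMeasurable fun ω => Λ ω f)
    (hmeasΓ : ∀ f : H, StronglyMeasurable fun ω => Γ ω f)
    (BΛ : ℝ) (hBΛ : 0 < BΛ)
    (hBesselΛ : ∀ f : H, ∫ ω, ‖Λ ω f‖ ^ 2 ∂μ ≤ BΛ * ‖f‖ ^ 2)
    (B : ℝ) (hB : 0 < B)
    (hBesselΓ : ∀ f : H, ∫ ω, ‖Γ ω f‖ ^ 2 ∂μ ≤ B * ‖f‖ ^ 2)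
    (hrel : ∀ f h : H, ⟪K f, h⟫ = ∫ ω, ⟪(Λ ω).adjoint (Γ ω f), h⟫ ∂μ) :
    (∀ f ∈ LinearMap.range (K : H →ₗ[ℂ] H),
        ∫ ω, ‖Γ ω (Kdag f)‖ ^ 2 ∂μ ≤ B * ‖Kdag‖ ^ 2 * ‖f‖ ^ 2) ∧
    (∀ f ∈ LinearMap.range (K : H →ₗ[ℂ] H), ∀ h : H,
        ⟪f, h⟫ = ∫ ω, ⟪(Λ ω).adjoint (Γ ω (Kdag f)), h⟫ ∂μ) := by
  constructor
  · intro f hf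
    calc ∫ ω, ‖Γ ω (Kdag f)‖ ^ 2 ∂μ ≤ B * ‖Kdag f‖ ^ 2 := hBesselΓ _
      _ ≤ B * ‖Kdag‖ ^ 2 * ‖f‖ ^ 2 := by
          rw [mul_assoc]
          apply mul_le_mul_of_nonneg_left _ hB.le
          rw [← mul_pow]
          exact pow_le_pow_left₀ (norm_nonneg _) (Kdag.le_opNorm f) 2
  · intro f hf h
    conv_lhs => rw [← hKdag f hf]
    exact hrel (Kdag f) h
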